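/- Let g be a non-perfect Lie algebra over K (char 0), t ∈ K with t ≠ 0, t ≠ 1, and fix a complementary subspace a with g = a ⊕ ⁅g,g⁆. If D is a (t,1,0)-derivation of g, then the linear map D̂ defined by D̂ = (1/t)·D on a and D̂ = D on ⁅g,g⁆ is a (1,1,0)-derivation of g, i.e., an element of the centroid: D̂⁅X,Y⁆ = ⁅D̂X,Y⁆ for all X,Y. Consequently D(t,1,0)(g) embeds linearly into the centroid of g. -/

import Mathlib

section Defs
variable (K L : Type*) [Field K] [LieRing L] [LieAlgebra K L]

/-- The space of (t,1,0)-derivations of a Lie algebra. -/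
def lieDerivSpace (t : K) : Submodule K (L →ₗ[K] L) where
  carrier := {D | ∀ X Y : L, t • D ⁅X, Y⁆ = ⁅D X, Y⁆}
  add_mem' := by
    intro a b ha hb X Y
    simp only [LinearMap.add_apply, smul_add, ha X Y, hb X Y, add_lie]
  zero_mem' := by intro X Y; simp
  smul_mem' := by
    intro c a ha X Y
    simp only [LinearMap.smul_apply, smul_comm t c, ha X Y, smul_lie]

/-- The center of a Lie algebra, as a submodule. -/
def lieCenterSub : Submodule K L where
  carrier := {X | ∀ Y : L, ⁅X, Y⁆ = 0}
  add_mem' := by intro a b ha hb Y; simp [add_lie, ha Y, hb Y]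
  zero_mem' := by intro Y; simp
  smul_mem' := by intro c a ha Y; simp [smul_lie, ha Y]

/-- The derived subalgebra, as a submodule. -/
def lieDerivedSub : Submodule K L :=
  Submodule.span K {z | ∃ X Y : L, ⁅X, Y⁆ = z}

/-- The space Ω(g) of linear maps with image in the center and killing the derived subalgebra. -/
def lieOmega : Submodule K (L →ₗ[K] L) where
  carrier := {T | (∀ x y : L, ⁅T x, y⁆ = 0) ∧ ∀ x ∈ lieDerivedSub K L, T x = 0}
  add_mem' := by
    intro a b ha hb
    refine ⟨fun x y => ?_, fun x hx => ?_⟩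
    · simp [add_lie, ha.1 x y, hb.1 x y]
    · simp [ha.2 x hx, hb.2 x hx]
  zero_mem' := ⟨by simp, by simp⟩
  smul_mem' := by
    intro c a ha
    refine ⟨fun x y => ?_, fun x hx => ?_⟩
    · simp [smul_lie, ha.1 x y]
    · simp [ha.2 x hx]

end Defs

section Aux
variable {K L : Type*} [Field K] [LieRing L] [LieAlgebra K L]

theorem aux_kill2 (t : K) (ht0 : t ≠ 0) (ht1 : t ≠ 1) (D : L →ₗ[K] L)
    (hD : ∀ X Y : L, t • D ⁅X, Y⁆ = ⁅D X, Y⁆) (X Y Z : L) :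
    D ⁅X, ⁅Y, Z⁆⁆ = 0 := by
  have key : t • t • D ⁅⁅X, Y⁆, Z⁆
      = t • D ⁅X, ⁅Y, Z⁆⁆ + t • t • D ⁅⁅X, Z⁆, Y⁆ := by
    calc t • t • D ⁅⁅X, Y⁆, Z⁆ = t • ⁅D ⁅X, Y⁆, Z⁆ := by rw [hD]
      _ = ⁅t • D ⁅X, Y⁆, Z⁆ := (smul_lie _ _ _).symm
      _ = ⁅⁅D X, Y⁆, Z⁆ := by rw [hD]
      _ = ⁅D X, ⁅Y, Z⁆⁆ - ⁅Y, ⁅D X, Z⁆⁆ := lie_lie _ _ _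
      _ = ⁅D X, ⁅Y, Z⁆⁆ + ⁅⁅D X, Z⁆, Y⁆ := by
            rw [← lie_skew Y ⁅D X, Z⁆, sub_neg_eq_add]
      _ = t • D ⁅X, ⁅Y, Z⁆⁆ + ⁅t • D ⁅X, Z⁆, Y⁆ := by rw [hD, hD]
      _ = t • D ⁅X, ⁅Y, Z⁆⁆ + t • ⁅D ⁅X, Z⁆, Y⁆ := by rw [smul_lie]
      _ = t • D ⁅X, ⁅Y, Z⁆⁆ + t • t • D ⁅⁅X, Z⁆, Y⁆ := by rw [hD ⁅X, Z⁆ Y]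
  have hA : D ⁅⁅X, Y⁆, Z⁆ = D ⁅X, ⁅Y, Z⁆⁆ + D ⁅⁅X, Z⁆, Y⁆ := by
    rw [← map_add]
    congr 1
    rw [lie_lie, ← lie_skew Y ⁅X, Z⁆, sub_neg_eq_add]
  rw [hA, smul_add, smul_add] at key
  have h2 : t • t • D ⁅X, ⁅Y, Z⁆⁆ = t • D ⁅X, ⁅Y, Z⁆⁆ := add_right_cancel key
  have h3 : (t * t - t) • D ⁅X, ⁅Y, Z⁆⁆ = 0 := by
    rw [sub_smul, mul_smul, h2, sub_self]
  have hne : t * t - t ≠ 0 := by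
    have h : t * (t - 1) ≠ 0 := mul_ne_zero ht0 (sub_ne_zero.mpr ht1)
    intro h'; apply h; rw [← h']; ring
  rcases smul_eq_zero.mp h3 with h | h
  · exact absurd h hne
  · exact h

theorem aux_kill (t : K) (ht0 : t ≠ 0) (ht1 : t ≠ 1) (D : L →ₗ[K] L)
    (hD : ∀ X Y : L, t • D ⁅X, Y⁆ = ⁅D X, Y⁆) :
    ∀ z ∈ lieDerivedSub K L, ∀ Y : L, ⁅D z, Y⁆ = 0 := by
  intro z hz Y
  induction hz using Submodule.span_induction with
  | mem x hx =>
      obtain ⟨u, v, rfl⟩ := hx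
      rw [← hD]
      rw [show (⁅(⁅u,v⁆ : L), Y⁆ : L) = -⁅Y, ⁅u, v⁆⁆ from by rw [← lie_skew]]
      rw [map_neg, aux_kill2 t ht0 ht1 D hD, neg_zero, smul_zero]
  | zero => simp
  | add x y _ _ hx hy => rw [map_add, add_lie, hx, hy, add_zero]
  | smul c x _ hx => rw [map_smul, smul_lie, hx, smul_zero]

end Aux

theorem stmt_8 {K L : Type*} [Field K] [CharZero K] [LieRing L] [LieAlgebra K L]
    (hnonperfect : lieDerivedSub K L ≠ ⊤)
    (t : K) (ht0 : t ≠ 0) (ht1 : t ≠ 1)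
    (a : Submodule K L) (ha : IsCompl a (lieDerivedSub K L)) :
    (∀ D ∈ lieDerivSpace K L t, ∀ Dhat : L →ₗ[K] L,
        (∀ x ∈ a, Dhat x = t⁻¹ • D x) →
        (∀ x ∈ lieDerivedSub K L, Dhat x = D x) →
        ∀ X Y : L, Dhat ⁅X, Y⁆ = ⁅Dhat X, Y⁆) ∧
      ∃ φ : lieDerivSpace K L t →ₗ[K] lieDerivSpace K L 1, Function.Injective φ := by
  have hbra : ∀ X Y : L, (⁅X, Y⁆ : L) ∈ lieDerivedSub K L :=
    fun X Y => Submodule.subset_span ⟨X, Y, rfl⟩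
  have part1 : ∀ D ∈ lieDerivSpace K L t, ∀ Dhat : L →ₗ[K] L,
      (∀ x ∈ a, Dhat x = t⁻¹ • D x) →
      (∀ x ∈ lieDerivedSub K L, Dhat x = D x) →
      ∀ X Y : L, Dhat ⁅X, Y⁆ = ⁅Dhat X, Y⁆ := by
    intro D hD Dhat h1 h2 X Y
    have hDrel : ∀ X Y : L, t • D ⁅X, Y⁆ = ⁅D X, Y⁆ := hD
    have hkill := aux_kill t ht0 ht1 D hDrel
    set p : L := (a.projectionOnto _ ha X : L) with hp
    set q : L := ((lieDerivedSub K L).projectionOnto a ha.symm X : L) with hq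
    have hpa : p ∈ a := Submodule.coe_mem _
    have hqd : q ∈ lieDerivedSub K L := Submodule.coe_mem _
    have hX : p + q = X := Submodule.projection_add_projection_eq_self ha X
    have hDbra : D ⁅X, Y⁆ = t⁻¹ • ⁅D X, Y⁆ := by
      rw [← hDrel X Y, ← mul_smul, inv_mul_cancel₀ ht0, one_smul]
    have hDhatX : Dhat X = t⁻¹ • D p + D q := by
      rw [← hX, map_add, h1 p hpa, h2 q hqd]
    rw [h2 _ (hbra X Y), hDbra, hDhatX, add_lie, smul_lie, hkill q hqd Y, add_zero,
      ← hX, map_add, add_lie, hkill q hqd Y, add_zero]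
  refine ⟨part1, ?_⟩
  set e₁ : L →ₗ[K] L := a.subtype ∘ₗ a.projectionOnto _ ha with he₁
  set e₂ : L →ₗ[K] L :=
    (lieDerivedSub K L).subtype ∘ₗ (lieDerivedSub K L).projectionOnto a ha.symm with he₂
  have he₁a : ∀ x : L, e₁ x ∈ a := fun x => Submodule.coe_mem _
  have he₂d : ∀ x : L, e₂ x ∈ lieDerivedSub K L := fun x => Submodule.coe_mem _
  have hsum : ∀ x : L, e₁ x + e₂ x = x :=
    fun x => Submodule.projection_add_projection_eq_self ha x
  have he₁left : ∀ x ∈ a, e₁ x = x := by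
    intro x hx
    show (↑(a.projectionOnto _ ha x) : L) = x
    rw [show x = ((⟨x, hx⟩ : a) : L) from rfl, Submodule.projectionOnto_apply_left ha]
  have he₂left : ∀ x ∈ lieDerivedSub K L, e₂ x = x := by
    intro x hx
    show (↑((lieDerivedSub K L).projectionOnto a ha.symm x) : L) = x
    rw [show x = ((⟨x, hx⟩ : lieDerivedSub K L) : L) from rfl,
      Submodule.projectionOnto_apply_left ha.symm]
  have he₂a : ∀ x ∈ a, e₂ x = 0 := by
    intro x hx
    show (↑((lieDerivedSub K L).projectionOnto a ha.symm x) : L) = 0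
    rw [Submodule.projectionOnto_apply_of_mem_right ha.symm hx, Submodule.coe_zero]
  have he₁d : ∀ x ∈ lieDerivedSub K L, e₁ x = 0 := by
    intro x hx
    show (↑(a.projectionOnto _ ha x) : L) = 0
    rw [Submodule.projectionOnto_apply_of_mem_right ha hx, Submodule.coe_zero]
  -- the candidate map
  let Φ : (L →ₗ[K] L) → (L →ₗ[K] L) := fun D => t⁻¹ • (D ∘ₗ e₁) + D ∘ₗ e₂
  have hΦa : ∀ D : L →ₗ[K] L, ∀ x ∈ a, Φ D x = t⁻¹ • D x := by
    intro D x hx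
    simp only [Φ, LinearMap.add_apply, LinearMap.smul_apply, LinearMap.comp_apply,
      he₁left x hx, he₂a x hx, map_zero, add_zero]
  have hΦd : ∀ D : L →ₗ[K] L, ∀ x ∈ lieDerivedSub K L, Φ D x = D x := by
    intro D x hx
    simp only [Φ, LinearMap.add_apply, LinearMap.smul_apply, LinearMap.comp_apply,
      he₁d x hx, he₂left x hx, map_zero, smul_zero, zero_add]
  have hΦmem : ∀ D ∈ lieDerivSpace K L t, Φ D ∈ lieDerivSpace K L 1 := by
    intro D hD X Y
    rw [one_smul]
    exact part1 D hD (Φ D) (hΦa D) (hΦd D) X Y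
  refine ⟨{ toFun := fun D => ⟨Φ D.1, hΦmem D.1 D.2⟩
            map_add' := ?_
            map_smul' := ?_ }, ?_⟩
  · intro D E
    apply Subtype.ext
    apply LinearMap.ext
    intro x
    simp [Φ, smul_add]
    abel
  · intro c D
    apply Subtype.ext
    apply LinearMap.ext
    intro x
    simp [Φ, smul_comm t⁻¹ c]
  · intro D E h
    have h' : Φ D.1 = Φ E.1 := congrArg Subtype.val h
    apply Subtype.ext
    apply LinearMap.ext
    intro x
    have hxa : D.1 (e₁ x) = E.1 (e₁ x) := by
      have := LinearMap.congr_fun h' (e₁ x)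
      rw [hΦa D.1 _ (he₁a x), hΦa E.1 _ (he₁a x)] at this
      exact smul_right_injective L (inv_ne_zero ht0) this
    have hxd : D.1 (e₂ x) = E.1 (e₂ x) := by
      have := LinearMap.congr_fun h' (e₂ x)
      rwa [hΦd D.1 _ (he₂d x), hΦd E.1 _ (he₂d x)] at this
    calc D.1 x = D.1 (e₁ x) + D.1 (e₂ x) := by rw [← map_add, hsum]
      _ = E.1 (e₁ x) + E.1 (e₂ x) := by rw [hxa, hxd]
      _ = E.1 x := by rw [← map_add, hsum]
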